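/- Consider the n-period He model: Ω = {1, …, d+1}^n with the uniform product probability measure P, ξ_m(ω) = v_{ω_m}, filtration F_k = σ(ξ_1, …, ξ_k), and asset prices S^{n,i}_k = s_i Π_{m=1}^k (1 + n^{-1/2}⟨σ_i, ξ_m⟩) for i = 1, …, d, where v_1, …, v_{d+1} ∈ ℝ^d satisfy the simplex conditions, σ is an invertible d×d matrix with rows σ_1, …, σ_d, s_i > 0, and n is large enough that 1 + n^{-1/2}⟨σ_i, v_j⟩ > 0 for all i, j. If Q is any probability measure on (Ω, F_n) such that each process (S^{n,i}_k)_{k=0,…,n} is a Q-martingale with respect to (F_k)_{k=0,…,n}, then Q = P. -/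

import Mathlib

open scoped BigOperators
open Matrix

/-- The sample space of the `n`-period He model: sequences of `n` directions
among the `d+1` simplex vertices. -/
abbrev HeOmega (d n : ℕ) := Fin n → Fin (d + 1)

/-- in the `n`-period He model, the uniform measure is the unique
martingale measure for the asset prices.  Probability measures on the finite
space `Ω = {1,…,d+1}ⁿ` are identified with their weight functions `Q`, the
filtration `F_k = σ(ξ₁,…,ξ_k)` consists of the events depending only on the
first `k` coordinates, and the martingale property of `S` under `Q` is expressed
by testing against all `F_k`-measurable functions `φ`. -/
theorem he_model_unique_martingale_measure (d n : ℕ) (hd : 1 ≤ d) (hn : 1 ≤ n)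
    (v : Fin (d + 1) → Fin d → ℝ)
    (hnorm : ∀ i, ∑ k, v i k ^ 2 = (d : ℝ))
    (hinner : ∀ i j, i ≠ j → ∑ k, v i k * v j k = -1)
    (σ : Matrix (Fin d) (Fin d) ℝ) (hσ : IsUnit σ.det)
    (s : Fin d → ℝ) (hs : ∀ i, 0 < s i)
    (hpos : ∀ i j, 0 < 1 + (1 / Real.sqrt n) * ∑ l, σ i l * v j l)
    (S : Fin d → ℕ → HeOmega d n → ℝ)
    (hS : ∀ i k ω, S i k ω =
      s i * ∏ m ∈ Finset.univ.filter (fun m : Fin n => (m : ℕ) < k),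
        (1 + (1 / Real.sqrt n) * ∑ l, σ i l * v (ω m) l))
    (Q : HeOmega d n → ℝ)
    (hQ0 : ∀ ω, 0 ≤ Q ω) (hQ1 : ∑ ω, Q ω = 1)
    (hmart : ∀ i : Fin d, ∀ k < n, ∀ φ : HeOmega d n → ℝ,
      (∀ ω ω' : HeOmega d n, (∀ m : Fin n, (m : ℕ) < k → ω m = ω' m) → φ ω = φ ω') →
      ∑ ω, Q ω * φ ω * S i (k + 1) ω = ∑ ω, Q ω * φ ω * S i k ω) :
    ∀ ω, Q ω = 1 / ((d : ℝ) + 1) ^ n := by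
  classical
  set c : ℝ := 1 / Real.sqrt n with hc
  have hsqrt : 0 < Real.sqrt n := Real.sqrt_pos.mpr (by exact_mod_cast hn)
  have hcne : c ≠ 0 := by
    rw [hc]; positivity
  have hd1 : ((d : ℝ) + 1) ≠ 0 := by positivity
  have hSpos : ∀ i k ω, 0 < S i k ω := by
    intro i k ω; rw [hS]
    exact mul_pos (hs i) (Finset.prod_pos fun m _ => hpos i (ω m))
  -- S i k depends only on coordinates < k
  have hSmeas : ∀ i k (ω ω' : HeOmega d n),
      (∀ m : Fin n, (m : ℕ) < k → ω m = ω' m) → S i k ω = S i k ω' := by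
    intro i k ω ω' h
    rw [hS, hS]
    congr 1
    refine Finset.prod_congr rfl fun m hm => ?_
    rw [h m (Finset.mem_filter.mp hm).2]
  -- one-step decomposition of S
  have hSstep : ∀ i k (hk : k < n) (ω : HeOmega d n),
      S i (k + 1) ω = S i k ω * (1 + c * ∑ l, σ i l * v (ω ⟨k, hk⟩) l) := by
    intro i k hk ω
    rw [hS, hS]
    have hset : Finset.univ.filter (fun m : Fin n => (m : ℕ) < k + 1)
        = insert (⟨k, hk⟩ : Fin n) (Finset.univ.filter (fun m : Fin n => (m : ℕ) < k)) := by
      ext m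
      simp only [Finset.mem_filter, Finset.mem_univ, true_and, Finset.mem_insert]
      constructor
      · intro h
        rcases Nat.lt_succ_iff_lt_or_eq.mp h with h' | h'
        · exact Or.inr h'
        · exact Or.inl (Fin.ext h')
      · rintro (rfl | h)
        · exact Nat.lt_succ_self k
        · exact Nat.lt_succ_of_lt h
    have hnotmem : (⟨k, hk⟩ : Fin n) ∉ Finset.univ.filter (fun m : Fin n => (m : ℕ) < k) := by
      simp
    rw [hset, Finset.prod_insert hnotmem]
    ring
  -- main induction: mass of the cylinder determined by the first k coordinates
  have key : ∀ k, k ≤ n → ∀ ω : HeOmega d n,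
      ∑ ω' ∈ Finset.univ.filter
        (fun ω' : HeOmega d n => ∀ m : Fin n, (m : ℕ) < k → ω' m = ω m), Q ω'
        = 1 / ((d : ℝ) + 1) ^ k := by
    intro k
    induction k with
    | zero =>
      intro _ ω
      have : (Finset.univ.filter
          (fun ω' : HeOmega d n => ∀ m : Fin n, (m : ℕ) < 0 → ω' m = ω m))
          = Finset.univ := by
        ext ω'; simp
      rw [this, hQ1]; simp
    | succ k ih =>
      intro hk1 ω
      have hk : k < n := hk1
      set km : Fin n := ⟨k, hk⟩ with hkm
      set C : Finset (HeOmega d n) :=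
        Finset.univ.filter (fun ω' : HeOmega d n => ∀ m : Fin n, (m : ℕ) < k → ω' m = ω m)
        with hC
      set w : Fin (d + 1) → ℝ := fun j => ∑ ω' ∈ C.filter (fun ω' => ω' km = j), Q ω'
        with hw
      have hM : ∑ j, w j = 1 / ((d : ℝ) + 1) ^ k := by
        rw [hw]
        rw [Finset.sum_fiberwise C (fun ω' => ω' km) Q]
        exact ih hk.le ω
      -- martingale condition with indicator/normalized test function
      have hzero : ∀ i : Fin d, ∑ j, w j * ∑ l, σ i l * v j l = 0 := by
        intro i
        set φ : HeOmega d n → ℝ := fun ω' =>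
          if (∀ m : Fin n, (m : ℕ) < k → ω' m = ω m) then (S i k ω')⁻¹ else 0 with hφ
        have hφmeas : ∀ ω₁ ω₂ : HeOmega d n,
            (∀ m : Fin n, (m : ℕ) < k → ω₁ m = ω₂ m) → φ ω₁ = φ ω₂ := by
          intro ω₁ ω₂ h
          have hiff : (∀ m : Fin n, (m : ℕ) < k → ω₁ m = ω m) ↔
              (∀ m : Fin n, (m : ℕ) < k → ω₂ m = ω m) := by
            constructor
            · intro h1 m hm; rw [← h m hm]; exact h1 m hm
            · intro h2 m hm; rw [h m hm]; exact h2 m hm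
          rw [hφ]
          simp only
          by_cases h1 : ∀ m : Fin n, (m : ℕ) < k → ω₁ m = ω m
          · rw [if_pos h1, if_pos (hiff.mp h1), hSmeas i k ω₁ ω₂ h]
          · rw [if_neg h1, if_neg (fun h2 => h1 (hiff.mpr h2))]
        have hm := hmart i k hk φ hφmeas
        -- rewrite both sides as sums over C
        have hL : ∑ ω', Q ω' * φ ω' * S i (k + 1) ω'
            = ∑ ω' ∈ C, Q ω' * (1 + c * ∑ l, σ i l * v (ω' km) l) := by
          rw [hC, Finset.sum_filter]
          refine Finset.sum_congr rfl fun ω' _ => ?_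
          simp only [hφ]
          by_cases h1 : ∀ m : Fin n, (m : ℕ) < k → ω' m = ω m
          · rw [if_pos h1, if_pos h1, hSstep i k hk ω']
            field_simp [(hSpos i k ω').ne']
            ring
          · rw [if_neg h1, if_neg h1]; ring
        have hR : ∑ ω', Q ω' * φ ω' * S i k ω' = ∑ ω' ∈ C, Q ω' := by
          rw [hC, Finset.sum_filter]
          refine Finset.sum_congr rfl fun ω' _ => ?_
          simp only [hφ]
          by_cases h1 : ∀ m : Fin n, (m : ℕ) < k → ω' m = ω m
          · rw [if_pos h1, if_pos h1]
            field_simp [(hSpos i k ω').ne']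
          · rw [if_neg h1, if_neg h1]; ring
        rw [hL, hR] at hm
        have hsum0 : ∑ ω' ∈ C, Q ω' * ∑ l, σ i l * v (ω' km) l = 0 := by
          have expand : ∑ ω' ∈ C, Q ω' * (1 + c * ∑ l, σ i l * v (ω' km) l)
              = ∑ ω' ∈ C, Q ω' + c * ∑ ω' ∈ C, Q ω' * ∑ l, σ i l * v (ω' km) l := by
            rw [Finset.mul_sum, ← Finset.sum_add_distrib]
            refine Finset.sum_congr rfl fun ω' _ => ?_
            ring
          rw [expand] at hm
          have := add_left_cancel (a := ∑ ω' ∈ C, Q ω')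
            (by rw [hm, add_zero] : ∑ ω' ∈ C, Q ω' + c * ∑ ω' ∈ C, Q ω' * ∑ l, σ i l * v (ω' km) l
              = ∑ ω' ∈ C, Q ω' + 0)
          exact (mul_eq_zero.mp this).resolve_left hcne
        -- fiberwise decomposition
        rw [hw]
        rw [← Finset.sum_fiberwise C (fun ω' => ω' km)
          (fun ω' => Q ω' * ∑ l, σ i l * v (ω' km) l)] at hsum0
        rw [← hsum0]
        refine Finset.sum_congr rfl fun j _ => ?_
        rw [Finset.sum_mul]
        refine Finset.sum_congr rfl fun ω' hω' => ?_
        rw [(Finset.mem_filter.mp hω').2]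
      -- deduce ∑ⱼ w j • v j = 0 using invertibility of σ
      set u : Fin d → ℝ := fun l => ∑ j, w j * v j l with hu
      have hmulvec : σ *ᵥ u = 0 := by
        funext i
        simp only [Matrix.mulVec, dotProduct, hu, Pi.zero_apply]
        rw [← hzero i]
        simp_rw [Finset.mul_sum]
        rw [Finset.sum_comm]
        exact Finset.sum_congr rfl fun j _ => Finset.sum_congr rfl fun l _ => by ring
      have hu0 : u = 0 := by
        have : σ⁻¹ *ᵥ (σ *ᵥ u) = σ⁻¹ *ᵥ 0 := by rw [hmulvec]
        rwa [Matrix.mulVec_mulVec, Matrix.nonsing_inv_mul σ hσ, Matrix.one_mulVec,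
          Matrix.mulVec_zero] at this
      -- simplex geometry: each w j equals M / (d+1)
      have hwj : ∀ j0 : Fin (d + 1), w j0 = 1 / ((d : ℝ) + 1) ^ (k + 1) := by
        intro j0
        have h0 : ∑ l, v j0 l * u l = 0 := by
          simp [hu0]
        have h1 : ∑ l, v j0 l * u l = ∑ j, w j * ∑ l, v j0 l * v j l := by
          simp only [hu]
          simp_rw [Finset.mul_sum]
          rw [Finset.sum_comm]
          exact Finset.sum_congr rfl fun j _ => Finset.sum_congr rfl fun l _ => by ring
        have h2 : ∑ j, w j * ∑ l, v j0 l * v j l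
            = w j0 * (d : ℝ) - (∑ j, w j - w j0) := by
          rw [← Finset.add_sum_erase _ _ (Finset.mem_univ j0)]
          have hj0 : ∑ l, v j0 l * v j0 l = (d : ℝ) := by
            rw [← hnorm j0]
            exact Finset.sum_congr rfl fun l _ => (sq (v j0 l)).symm
          rw [hj0]
          have hrest : ∑ j ∈ Finset.univ.erase j0, w j * ∑ l, v j0 l * v j l
              = ∑ j ∈ Finset.univ.erase j0, w j * (-1) := by
            refine Finset.sum_congr rfl fun j hj => ?_
            rw [hinner j0 j (Ne.symm (Finset.mem_erase.mp hj).1)]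
          rw [hrest]
          rw [← Finset.add_sum_erase _ w (Finset.mem_univ j0)]
          simp only [mul_neg_one]
          rw [Finset.sum_neg_distrib]
          ring
        have h3 : w j0 * ((d : ℝ) + 1) = ∑ j, w j := by
          have := h1 ▸ h0
          rw [h2] at this
          linarith
        rw [hM] at h3
        have : w j0 = 1 / ((d : ℝ) + 1) ^ k / ((d : ℝ) + 1) := by
          field_simp at h3 ⊢
          linarith
        rw [this, pow_succ]
        field_simp
      -- conclude for the (k+1)-cylinder
      have hCsucc : Finset.univ.filter
          (fun ω' : HeOmega d n => ∀ m : Fin n, (m : ℕ) < k + 1 → ω' m = ω m)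
          = C.filter (fun ω' => ω' km = ω km) := by
        ext ω'
        simp only [hC, Finset.mem_filter, Finset.mem_univ, true_and]
        constructor
        · intro h
          refine ⟨fun m hm => h m (Nat.lt_succ_of_lt hm), h km (Nat.lt_succ_self k)⟩
        · rintro ⟨h1, h2⟩ m hm
          rcases Nat.lt_succ_iff_lt_or_eq.mp hm with h' | h'
          · exact h1 m h'
          · have : m = km := Fin.ext h'
            rw [this]; exact h2
      rw [hCsucc]
      exact hwj (ω km)
  intro ω
  have hfin : Finset.univ.filter
      (fun ω' : HeOmega d n => ∀ m : Fin n, (m : ℕ) < n → ω' m = ω m) = {ω} := by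
    ext ω'
    simp only [Finset.mem_filter, Finset.mem_univ, true_and, Finset.mem_singleton]
    constructor
    · intro h; funext m; exact h m m.isLt
    · rintro rfl m _; rfl
  have := key n le_rfl ω
  rw [hfin, Finset.sum_singleton] at this
  exact this
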